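/- Let P be a finite ranked poset with rank function r, P* ⊆ P containing all minimal and maximal elements, and λ^r the induced marking. Let P̃ = P \ P* = C ⊔ O be any partition into chain and order elements. Then the point x given by x_p = r(p) for p ∈ O and x_p = 1 for p ∈ C is an interior lattice point of the marked chain-order polytope O_{C,O}(P, λ^r) ⊆ ℝ^{P̃}. -/

import Mathlib

open scoped Classical

/-- A saturated chain `a ≺ p₁ ≺ ⋯ ≺ p_r ≺ b` with all interior elements in `C`. -/
def SatChain {P : Type*} [PartialOrder P] (C : Set P) (a b : P) (l : List P) : Prop :=
  (∀ p ∈ l, p ∈ C) ∧ List.Chain' (· ⋖ ·) (a :: (l ++ [b]))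

/-- The marked chain-order polyhedron `O_{C,O}(P,λ) ⊆ ℝ^P`. -/
def MCO {P : Type*} [PartialOrder P] (Pstar C O : Set P) (lam : P → ℝ) : Set (P → ℝ) :=
  {x | (∀ a ∈ Pstar, x a = lam a) ∧ (∀ p ∈ C, 0 ≤ x p) ∧
    ∀ a b l, a ∈ Pstar ∪ O → b ∈ Pstar ∪ O → SatChain C a b l →
      (l.map x).sum ≤ x b - x a}

/-- Extend a point `x ∈ ℝ^{P̃}` on the unmarked elements by the marking `λ` on `P*`. -/
noncomputable def extFun {P : Type*} (Pstar : Set P) (lam : P → ℝ)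
    (x : {p : P // p ∉ Pstar} → ℝ) : P → ℝ :=
  fun p => if h : p ∈ Pstar then lam p else x ⟨p, h⟩

/-- The projected marked chain-order polytope `O_{C,O}(P,λ) ⊆ ℝ^{P̃}`. -/
def MCOproj {P : Type*} [PartialOrder P] (Pstar C O : Set P) (lam : P → ℝ) :
    Set ({p : P // p ∉ Pstar} → ℝ) :=
  {x | extFun Pstar lam x ∈ MCO Pstar C O lam}

/-- A point of `ℝ^ι` is a lattice point if all its coordinates are integers. -/
def IsLat {ι : Type*} (x : ι → ℝ) : Prop := ∀ p, ∃ n : ℤ, x p = n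

/-- for a finite ranked poset with rank function `r`, marked elements
`P* ⊇ min(P) ∪ max(P)` and any partition `P̃ = C ⊔ O`, the point with coordinates `r(p)`
for `p ∈ O` and `1` for `p ∈ C` is an interior lattice point of `O_{C,O}(P, λʳ)`. -/


lemma satchain_rank {P : Type*} [PartialOrder P] (r : P → ℤ)
    (hr : ∀ p q : P, p ⋖ q → r p = r q - 1) :
    ∀ (l : List P) (a b : P), List.Chain' (· ⋖ ·) (a :: (l ++ [b])) →
      r b = r a + l.length + 1
  | [], a, b, h => by
      simp only [List.Chain', List.nil_append, List.isChain_cons_cons, List.isChain_singleton, and_true] at h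
      have := hr a b h
      simp only [List.length_nil]; omega
  | p :: l, a, b, h => by
      rw [List.Chain', List.cons_append, List.isChain_cons_cons] at h
      have h1 := hr a p h.1
      have h2 := satchain_rank r hr l p b h.2
      simp only [List.length_cons] at *; omega

lemma satchain_len {P : Type*} [PartialOrder P] [Fintype P] (l : List P) (a b : P)
    (h : List.Chain' (· ⋖ ·) (a :: (l ++ [b]))) :
    l.length + 2 ≤ Fintype.card P := by
  have h1 : List.Chain' (· < ·) (a :: (l ++ [b])) := h.imp (fun _ _ hc => hc.lt)
  have h2 : (a :: (l ++ [b])).Pairwise (· < ·) := List.isChain_iff_pairwise.mp h1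
  have h3 : (a :: (l ++ [b])).Nodup := h2.imp ne_of_lt
  have := h3.length_le_card
  simp at this ⊢; omega

theorem interior_lattice_point_mco {P : Type*} [PartialOrder P] [Fintype P]
    (r : P → ℤ) (hr : ∀ p q : P, p ⋖ q → r p = r q - 1)
    (Pstar C O : Set P)
    (hmin : ∀ p : P, IsMin p → p ∈ Pstar)
    (hmax : ∀ p : P, IsMax p → p ∈ Pstar)
    (hcover : C ∪ O = Pstarᶜ) (hdisj : Disjoint C O) :
    (fun p : {p : P // p ∉ Pstar} => if p.1 ∈ C then (1 : ℝ) else (r p.1 : ℝ)) ∈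
        interior (MCOproj Pstar C O fun a => (r a : ℝ)) ∧
      IsLat (fun p : {p : P // p ∉ Pstar} =>
        if p.1 ∈ C then (1 : ℝ) else (r p.1 : ℝ)) := by
  classical
  set x0 : {p : P // p ∉ Pstar} → ℝ :=
    fun p => if p.1 ∈ C then (1 : ℝ) else (r p.1 : ℝ) with hx0def
  have hnotstar : ∀ p ∈ C ∪ O, p ∉ Pstar := by
    intro p hp
    have : p ∈ Pstarᶜ := hcover ▸ hp
    exact this
  set n : ℕ := Fintype.card P with hn
  set ε : ℝ := 1 / (2 * (n + 2)) with hε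
  have hεpos : 0 < ε := by positivity
  have hεhalf : ε ≤ 1 / 2 := by
    rw [hε]
    apply one_div_le_one_div_of_le
    · norm_num
    · have : (0:ℝ) ≤ n := Nat.cast_nonneg n
      linarith
  constructor
  · refine mem_interior.mpr ⟨Metric.ball x0 ε, ?_, Metric.isOpen_ball,
      Metric.mem_ball_self hεpos⟩
    intro y hy
    have hclose : ∀ p : {p : P // p ∉ Pstar}, |y p - x0 p| < ε := by
      intro p
      calc |y p - x0 p| = dist (y p) (x0 p) := (Real.dist_eq _ _).symm
        _ ≤ dist y x0 := dist_le_pi_dist y x0 p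
        _ < ε := Metric.mem_ball.mp hy
    refine ⟨?_, ?_, ?_⟩
    · intro a ha
      simp [extFun, ha]
    · intro p hp
      have hps : p ∉ Pstar := hnotstar p (Or.inl hp)
      have h1 := hclose ⟨p, hps⟩
      have h2 : x0 ⟨p, hps⟩ = 1 := by simp [hx0def, hp]
      rw [h2] at h1
      have := abs_lt.mp h1
      simp only [extFun, dif_neg hps]
      linarith [this.1]
    · rintro a b l ha hb ⟨hlC, hchain⟩
      have hrank := satchain_rank r hr l a b hchain
      have hlen := satchain_len l a b hchain
      set f := extFun Pstar (fun a => (r a : ℝ)) y with hf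
      set k : ℕ := l.length with hk
      -- upper bound each chain coordinate
      have hub : ∀ z ∈ l.map f, z ≤ 1 + ε := by
        intro z hz
        obtain ⟨p, hp, rfl⟩ := List.mem_map.mp hz
        have hpC := hlC p hp
        have hps : p ∉ Pstar := hnotstar p (Or.inl hpC)
        have h1 := hclose ⟨p, hps⟩
        have h2 : x0 ⟨p, hps⟩ = 1 := by simp [hx0def, hpC]
        rw [h2] at h1
        have := abs_lt.mp h1
        simp only [hf, extFun, dif_neg hps]
        linarith [this.2]
      have hsum : (l.map f).sum ≤ (k : ℝ) * (1 + ε) := by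
        have := List.sum_le_card_nsmul (l.map f) (1 + ε) hub
        rw [hk]; simpa [nsmul_eq_mul, mul_add] using this
      -- endpoint bounds
      have hbval : (r b : ℝ) - ε ≤ f b := by
        rcases hb with hb | hb
        · simp [hf, extFun, hb]; linarith
        · have hbs : b ∉ Pstar := hnotstar b (Or.inr hb)
          have hbC : b ∉ C := fun hc => hdisj.ne_of_mem hc hb rfl
          have h1 := hclose ⟨b, hbs⟩
          have h2 : x0 ⟨b, hbs⟩ = (r b : ℝ) := by simp [hx0def, hbC]
          rw [h2] at h1
          have := abs_lt.mp h1
          simp only [hf, extFun, dif_neg hbs]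
          linarith [this.1]
      have haval : f a ≤ (r a : ℝ) + ε := by
        rcases ha with ha | ha
        · simp [hf, extFun, ha]; linarith
        · have has : a ∉ Pstar := hnotstar a (Or.inr ha)
          have haC : a ∉ C := fun hc => hdisj.ne_of_mem hc ha rfl
          have h1 := hclose ⟨a, has⟩
          have h2 : x0 ⟨a, has⟩ = (r a : ℝ) := by simp [hx0def, haC]
          rw [h2] at h1
          have := abs_lt.mp h1
          simp only [hf, extFun, dif_neg has]
          linarith [this.2]
      -- the key numeric estimate
      have hkε : ((k : ℝ) + 2) * ε ≤ 1 := by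
        have h1 : ((k : ℝ) + 2) ≤ (2 * ((n : ℝ) + 2)) := by
          have : (k : ℝ) + 2 ≤ (n : ℝ) := by exact_mod_cast hlen
          linarith [Nat.cast_nonneg (α := ℝ) n]
        have h2 : (2 * ((n : ℝ) + 2)) * ε = 1 := by
          rw [hε]; field_simp
        calc ((k : ℝ) + 2) * ε ≤ (2 * ((n : ℝ) + 2)) * ε := by
              apply mul_le_mul_of_nonneg_right h1 (le_of_lt hεpos)
          _ = 1 := h2
      have hrankR : (r b : ℝ) = (r a : ℝ) + (k : ℝ) + 1 := by
        rw [hk]; exact_mod_cast hrank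
      calc (l.map f).sum ≤ (k : ℝ) * (1 + ε) := hsum
        _ ≤ f b - f a := by nlinarith
  · intro p
    have hxp : x0 p = if p.1 ∈ C then (1 : ℝ) else (r p.1 : ℝ) := rfl
    by_cases h : p.1 ∈ C
    · exact ⟨1, by rw [hxp, if_pos h]; norm_num⟩
    · exact ⟨r p.1, by rw [hxp, if_neg h]⟩
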